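/- Over ℂ, let A be the 2×4 matrix with rows (1, 0, 0, 0) and (0, −1, 0, 0) (this is A₄(1,−1)). Then A is not associative, i.e. A·(A ⊗ I₂) ≠ A·(I₂ ⊗ A), yet the 3-algebra it generates, T(A) = A·(I₂ ⊗ A), which equals the 2×8 matrix with rows (1, 0, 0, 0, 0, 0, 0, 0) and (0, 1, 0, 0, 0, 0, 0, 0), is totally associative. Thus a totally associative 3-algebra can be generated by a non-associative algebra. -/

import Mathlib

open Matrix Kronecker

/-- Kronecker product of `Fin`-indexed matrices, with row/column blocks ordered
lexicographically via `finProdFinEquiv`: for 2x2-block factors the columns of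
`kron A B` appear in the order (1,1),(1,2),(2,1),(2,2). -/
def kron {F : Type*} [Mul F] {a b c d : ℕ}
    (A : Matrix (Fin a) (Fin b) F) (B : Matrix (Fin c) (Fin d) F) :
    Matrix (Fin (a * c)) (Fin (b * d)) F :=
  Matrix.reindex finProdFinEquiv finProdFinEquiv (A ⊗ₖ B)

/-- MSC of the ternary multiplication f(x,y,z) = x·(y·z) generated by the binary
algebra with MSC `A`, namely T(A) = A·(I₂ ⊗ A), a 2×8 matrix. -/
def T {F : Type*} [Field F] (A : Matrix (Fin 2) (Fin 4) F) : Matrix (Fin 2) (Fin 8) F :=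
  A * kron (1 : Matrix (Fin 2) (Fin 2) F) A

/-- A 2×8 MSC `B` is totally associative if
B·(B ⊗ I₂ ⊗ I₂) = B·(I₂ ⊗ B ⊗ I₂) = B·(I₂ ⊗ I₂ ⊗ B). -/
def TotAssoc (B : Matrix (Fin 2) (Fin 8) ℂ) : Prop :=
  B * kron (kron B (1 : Matrix (Fin 2) (Fin 2) ℂ)) (1 : Matrix (Fin 2) (Fin 2) ℂ) =
      B * kron (kron (1 : Matrix (Fin 2) (Fin 2) ℂ) B) (1 : Matrix (Fin 2) (Fin 2) ℂ) ∧
    B * kron (kron (1 : Matrix (Fin 2) (Fin 2) ℂ) B) (1 : Matrix (Fin 2) (Fin 2) ℂ) =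
      B * kron (kron (1 : Matrix (Fin 2) (Fin 2) ℂ) (1 : Matrix (Fin 2) (Fin 2) ℂ)) B



section Aux

private def Az : Matrix (Fin 2) (Fin 4) ℤ := !![1,0,0,0;0,-1,0,0]
private def Bz : Matrix (Fin 2) (Fin 8) ℤ := !![1,0,0,0,0,0,0,0;0,1,0,0,0,0,0,0]

private lemma kron_map {a b c d : ℕ} (A : Matrix (Fin a) (Fin b) ℤ)
    (B : Matrix (Fin c) (Fin d) ℤ) :
    (kron A B).map (Int.cast : ℤ → ℂ) = kron (A.map Int.cast) (B.map Int.cast) := by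
  ext i j
  simp [kron, Matrix.kroneckerMap_apply]

private lemma mul_map {a b c : ℕ} (A : Matrix (Fin a) (Fin b) ℤ)
    (B : Matrix (Fin b) (Fin c) ℤ) :
    (A * B).map (Int.cast : ℤ → ℂ) = A.map Int.cast * B.map Int.cast :=
  Matrix.map_mul (f := Int.castRingHom ℂ)

private lemma one_map {n : ℕ} :
    ((1 : Matrix (Fin n) (Fin n) ℤ).map (Int.cast : ℤ → ℂ)) = 1 := by
  simp

private lemma Az_map : Az.map (Int.cast : ℤ → ℂ) = !![(1 : ℂ), 0, 0, 0; 0, -1, 0, 0] := by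
  ext i j
  fin_cases i <;> fin_cases j <;> simp [Az]

private lemma Bz_map : Bz.map (Int.cast : ℤ → ℂ) =
    !![(1 : ℂ), 0, 0, 0, 0, 0, 0, 0; 0, 1, 0, 0, 0, 0, 0, 0] := by
  ext i j
  fin_cases i <;> fin_cases j <;> simp [Bz, show (![(1:ℤ),0,0,0,0,0,0,0] (5:Fin 8) : ℤ) = 0 from rfl, show (![(1:ℤ),0,0,0,0,0,0,0] (6:Fin 8) : ℤ) = 0 from rfl, show (![(1:ℤ),0,0,0,0,0,0,0] (7:Fin 8) : ℤ) = 0 from rfl, show (![(0:ℤ),1,0,0,0,0,0,0] (5:Fin 8) : ℤ) = 0 from rfl, show (![(0:ℤ),1,0,0,0,0,0,0] (6:Fin 8) : ℤ) = 0 from rfl, show (![(0:ℤ),1,0,0,0,0,0,0] (7:Fin 8) : ℤ) = 0 from rfl, show (![(1:ℂ),0,0,0,0,0,0,0] (5:Fin 8) : ℂ) = 0 from rfl, show (![(1:ℂ),0,0,0,0,0,0,0] (6:Fin 8) : ℂ) = 0 from rfl, show (![(1:ℂ),0,0,0,0,0,0,0] (7:Fin 8) : ℂ) = 0 from rfl,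 show (![(0:ℂ),1,0,0,0,0,0,0] (5:Fin 8) : ℂ) = 0 from rfl, show (![(0:ℂ),1,0,0,0,0,0,0] (6:Fin 8) : ℂ) = 0 from rfl, show (![(0:ℂ),1,0,0,0,0,0,0] (7:Fin 8) : ℂ) = 0 from rfl]

set_option maxHeartbeats 1000000 in
private lemma Tz : Az * kron (1 : Matrix (Fin 2) (Fin 2) ℤ) Az = Bz := by decide

set_option maxHeartbeats 8000000 in
private lemma totz1 :
    Bz * kron (kron Bz (1 : Matrix (Fin 2) (Fin 2) ℤ)) (1 : Matrix (Fin 2) (Fin 2) ℤ) =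
    Bz * kron (kron (1 : Matrix (Fin 2) (Fin 2) ℤ) Bz) (1 : Matrix (Fin 2) (Fin 2) ℤ) := by
  decide

set_option maxHeartbeats 8000000 in
private lemma totz2 :
    Bz * kron (kron (1 : Matrix (Fin 2) (Fin 2) ℤ) Bz) (1 : Matrix (Fin 2) (Fin 2) ℤ) =
    Bz * kron (kron (1 : Matrix (Fin 2) (Fin 2) ℤ) (1 : Matrix (Fin 2) (Fin 2) ℤ)) Bz := by
  decide

private lemma T_eq : T !![(1 : ℂ), 0, 0, 0; 0, -1, 0, 0] =
    !![(1 : ℂ), 0, 0, 0, 0, 0, 0, 0; 0, 1, 0, 0, 0, 0, 0, 0] := by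
  rw [T, ← Az_map, ← one_map, ← kron_map]
  erw [← mul_map]
  rw [Tz, Bz_map]

end Aux

/-- A = A₄(1,−1) is not associative as a binary algebra, yet the 3-algebra
it generates, T(A), is totally associative (and equals the stated 2×8 matrix).
Thus a totally associative 3-algebra can be generated by a non-associative
algebra. -/
theorem nonassoc_gives_totAssoc_A4_one :
    !![(1 : ℂ), 0, 0, 0;
         0, -1, 0, 0] * kron !![(1 : ℂ), 0, 0, 0;
         0, -1, 0, 0] (1 : Matrix (Fin 2) (Fin 2) ℂ) ≠
        !![(1 : ℂ), 0, 0, 0;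
         0, -1, 0, 0] * kron (1 : Matrix (Fin 2) (Fin 2) ℂ) !![(1 : ℂ), 0, 0, 0;
         0, -1, 0, 0] ∧
      T !![(1 : ℂ), 0, 0, 0;
         0, -1, 0, 0] = !![(1 : ℂ), 0, 0, 0, 0, 0, 0, 0;
         0, 1, 0, 0, 0, 0, 0, 0] ∧
      TotAssoc (T !![(1 : ℂ), 0, 0, 0;
         0, -1, 0, 0]) := by
  refine ⟨?_, T_eq, ?_, ?_⟩
  · intro h
    have h2 := congrFun (congrFun h 1) 1
    have e1 : (kron !![(1 : ℂ), 0, 0, 0; 0, -1, 0, 0] (1 : Matrix (Fin 2) (Fin 2) ℂ)) 1 1 = 1 := by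
      simp [kron, Matrix.one_apply]; rfl
    have e2 : (kron (1 : Matrix (Fin 2) (Fin 2) ℂ) !![(1 : ℂ), 0, 0, 0; 0, -1, 0, 0]) 1 1 = -1 := by
      simp [kron, Matrix.one_apply]; rfl
    simp [Matrix.mul_apply, Fin.sum_univ_succ, e1, e2] at h2
    norm_num at h2
  · rw [T_eq, ← Bz_map, ← @one_map 2, ← kron_map, ← kron_map]
    erw [← mul_map]
    rw [totz1, mul_map,
      kron_map, kron_map, @one_map 2]
    rfl
  · rw [T_eq, ← Bz_map, ← @one_map 2, ← kron_map, ← kron_map]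
    erw [← mul_map]
    rw [totz2, mul_map,
      kron_map, kron_map, @one_map 2]
    rfl
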